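/- The random Fourier feature map z(x) = √(2/D)(cos(ω₁ᵀx + b₁), …, cos(ω_Dᵀx + b_D)) is an unbiased estimator of a shift-invariant kernel: if ω is drawn from the Fourier transform probability density ρ of k and b uniformly on [0,2π], then E[2·cos(ωᵀx + b)·cos(ωᵀy + b)] = k(x,y) for every x,y, where k(x,y) = ∫ ρ(ω)cos(ωᵀ(x−y)) dω. -/
import Mathlib


open MeasureTheory Real

lemma inner_cos_int (a a' : ℝ) :
    (∫ b in (0:ℝ)..(2*π), 2 * Real.cos (a + b) * Real.cos (a' + b))
      = 2 * π * Real.cos (a - a') := by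
  have h : ∀ b : ℝ, 2 * Real.cos (a + b) * Real.cos (a' + b)
      = Real.cos (a - a') + Real.cos (2 * b + (a + a')) := by
    intro b
    rw [Real.cos_add_cos,
      show ((a - a') + (2 * b + (a + a'))) / 2 = a + b by ring,
      show ((a - a') - (2 * b + (a + a'))) / 2 = -(a' + b) by ring,
      Real.cos_neg]
  simp_rw [h]
  rw [intervalIntegral.integral_add
      ((continuous_const).intervalIntegrable _ _)
      ((by fun_prop : Continuous fun b : ℝ => Real.cos (2 * b + (a + a'))).intervalIntegrable _ _)]
  rw [intervalIntegral.integral_const,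
    intervalIntegral.integral_comp_mul_add Real.cos (two_ne_zero) (a + a'),
    integral_cos]
  have : Real.sin (2 * (2 * π) + (a + a')) = Real.sin (2 * 0 + (a + a')) := by
    rw [show 2 * (2 * π) + (a + a') = (a + a') + 2 * (2 * π) by ring]
    simp [Real.sin_add_int_mul_two_pi, show ((2:ℝ) * (2*π)) = (2:ℤ) * (2*π) by push_cast; ring]
  rw [this]
  simp

theorem random_fourier_features_unbiased {d : ℕ}
    (ρ : (Fin d → ℝ) → ℝ) (hρ : ∀ ω, 0 ≤ ρ ω)
    (hρ1 : ∫ ω : Fin d → ℝ, ρ ω = 1)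
    (k : (Fin d → ℝ) → (Fin d → ℝ) → ℝ)
    (hk : ∀ x y, k x y = ∫ ω : Fin d → ℝ, ρ ω * Real.cos (∑ i, ω i * (x i - y i)))
    (x y : Fin d → ℝ) :
    (∫ ω : Fin d → ℝ, ρ ω * ((1 / (2 * π)) *
        ∫ b in (0 : ℝ)..(2 * π),
          2 * Real.cos ((∑ i, ω i * x i) + b) * Real.cos ((∑ i, ω i * y i) + b)))
      = k x y := by
  rw [hk]
  congr 1
  funext ω
  rw [inner_cos_int]
  have hsum : (∑ i, ω i * x i) - (∑ i, ω i * y i) = ∑ i, ω i * (x i - y i) := by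
    rw [← Finset.sum_sub_distrib]; congr 1; funext i; ring
  rw [hsum]
  have hπ : (2 * π) ≠ 0 := by positivity
  field_simp
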